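/- (False-negative rate bound) With the same setup, P(C* < Ĉ^{(M−n)} ∧ C* ≥ c_a) ≤ ∑_{i=n+1}^{M} C(M,i) p^i (1−p)^{M−i}. -/

import Mathlib

open MeasureTheory ProbabilityTheory Finset

/-- The `k`-th smallest value (0-indexed) among `f 0, …, f (M-1)`. -/
noncomputable def orderStat {M : ℕ} (f : Fin M → ℝ) (k : Fin M) : ℝ :=
  f (Tuple.sort f k)

/-- False-negative rate bound: if the predicted costs `Ĉ₁,…,Ĉ_M` are i.i.d. with
`P(Ĉⱼ ≥ c_a) = p` and independent of the observed cost `C*`, then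
`P(C* < Ĉ^{(M−n)} ∧ C* ≥ c_a) ≤ ∑_{i=n+1}^{M} C(M,i) pⁱ (1-p)^{M-i}`. -/
theorem stmt3 {Ω : Type*} [MeasurableSpace Ω] (P : Measure Ω) [IsProbabilityMeasure P]
    (M n : ℕ) (hM : 1 ≤ M) (hn : n ≤ M - 1)
    (p : ℝ) (hp : p ∈ Set.Icc (0 : ℝ) 1) (c_a : ℝ)
    (Cstar : Ω → ℝ) (Chat : Fin M → Ω → ℝ)
    (hmeasC : Measurable Cstar) (hmeas : ∀ j, Measurable (Chat j))
    (ν : Measure ℝ)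
    (hident : ∀ j, P.map (Chat j) = ν)
    (hind : iIndepFun Chat P)
    (hindC : IndepFun Cstar (fun ω (j : Fin M) => Chat j ω) P)
    (hquant : ∀ j, P {ω | c_a ≤ Chat j ω} = ENNReal.ofReal p) :
    P {ω | Cstar ω < orderStat (fun j => Chat j ω) ⟨M - n - 1, by omega⟩ ∧ c_a ≤ Cstar ω}
      ≤ ENNReal.ofReal (∑ i ∈ Finset.Icc (n + 1) M,
          (M.choose i : ℝ) * p ^ i * (1 - p) ^ (M - i)) := by
  classical
  obtain ⟨hp0, hp1⟩ := hp
  set A : Fin M → Set Ω := fun j => {ω | c_a ≤ Chat j ω} with hA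
  set E : Finset (Fin M) → Set Ω := fun T => ⋂ j, (if j ∈ T then A j else (A j)ᶜ) with hE
  -- Step 1: the event is contained in the union of E T over large T
  have hsub : {ω | Cstar ω < orderStat (fun j => Chat j ω) ⟨M - n - 1, by omega⟩ ∧ c_a ≤ Cstar ω}
      ⊆ ⋃ i ∈ Finset.Icc (n + 1) M, ⋃ T ∈ Finset.powersetCard i (Finset.univ : Finset (Fin M)),
          E T := by
    intro ω hω
    obtain ⟨h1, h2⟩ := hω
    set f : Fin M → ℝ := fun j => Chat j ω with hf
    set Tω : Finset (Fin M) := Finset.univ.filter (fun j => ω ∈ A j) with hTω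
    have hcard : n + 1 ≤ Tω.card := by
      have key : ∀ i : Fin (n + 1),
          c_a ≤ f (Tuple.sort f ⟨M - n - 1 + i, by omega⟩) := by
        intro i
        have hmono := Tuple.monotone_sort f
        have hle : (⟨M - n - 1, by omega⟩ : Fin M) ≤ ⟨M - n - 1 + i, by omega⟩ := by
          simp [Fin.mk_le_mk]
        have := hmono hle
        exact le_trans (le_trans h2 (le_of_lt h1)) this
      have hinj : Function.Injective
          (fun i : Fin (n + 1) => Tuple.sort f ⟨M - n - 1 + i, by omega⟩) := by
        intro a b hab
        have := (Tuple.sort f).injective hab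
        have : M - n - 1 + (a : ℕ) = M - n - 1 + (b : ℕ) := congrArg Fin.val this
        exact Fin.ext (by omega)
      calc n + 1 = (Finset.univ : Finset (Fin (n + 1))).card := by simp
        _ ≤ Tω.card := Finset.card_le_card_of_injOn
              (fun i => Tuple.sort f ⟨M - n - 1 + i, by omega⟩)
              (fun i _ => by
                simp only [hTω, Finset.mem_filter, Finset.mem_univ, true_and]
                exact Finset.mem_coe.mpr (Finset.mem_filter.mpr ⟨Finset.mem_univ _, key i⟩))
              hinj.injOn
    refine Set.mem_iUnion₂.mpr ⟨Tω.card, ?_, ?_⟩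
    · simp only [Finset.mem_Icc]
      refine ⟨hcard, ?_⟩
      calc Tω.card ≤ (Finset.univ : Finset (Fin M)).card := Finset.card_le_card (by simp)
        _ = M := by simp
    refine Set.mem_iUnion₂.mpr ⟨Tω, ?_, ?_⟩
    · simp [Finset.mem_powersetCard]
    · simp only [hE, Set.mem_iInter]
      intro j
      by_cases hj : j ∈ Tω
      · simp only [if_pos hj]
        exact (Finset.mem_filter.mp hj).2
      · simp only [if_neg hj]
        intro hcon
        exact hj (Finset.mem_filter.mpr ⟨Finset.mem_univ j, hcon⟩)
  refine le_trans (measure_mono hsub) ?_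
  -- Step 2: measure of each E T
  have hAmeas : ∀ j, MeasurableSet (A j) := fun j => (hmeas j) measurableSet_Ici
  have hPA : ∀ j, P (A j) = ENNReal.ofReal p := hquant
  have hPAc : ∀ j, P ((A j)ᶜ) = ENNReal.ofReal (1 - p) := by
    intro j
    rw [prob_compl_eq_one_sub (hAmeas j), hPA j, ← ENNReal.ofReal_one,
      ← ENNReal.ofReal_sub _ hp0]
  have hET : ∀ T : Finset (Fin M),
      P (E T) = ENNReal.ofReal p ^ T.card * ENNReal.ofReal (1 - p) ^ (M - T.card) := by
    intro T
    have hmeasiter : P (E T) = ∏ j, P (if j ∈ T then A j else (A j)ᶜ) := by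
      refine hind.meas_iInter ?_
      intro j
      by_cases hj : j ∈ T
      · simp only [if_pos hj]
        exact ⟨Set.Ici c_a, measurableSet_Ici, rfl⟩
      · simp only [if_neg hj]
        exact (MeasurableSpace.measurableSet_comap.mpr
          ⟨Set.Ici c_a, measurableSet_Ici, rfl⟩).compl
    rw [hmeasiter]
    rw [← Finset.prod_mul_prod_compl T]
    have h1 : ∏ j ∈ T, P (if j ∈ T then A j else (A j)ᶜ) = ENNReal.ofReal p ^ T.card := by
      rw [Finset.prod_congr rfl (fun j hj => by rw [if_pos hj, hPA j])]
      simp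
    have h2 : ∏ j ∈ Tᶜ, P (if j ∈ T then A j else (A j)ᶜ)
        = ENNReal.ofReal (1 - p) ^ (M - T.card) := by
      rw [Finset.prod_congr rfl (fun j hj => by
        rw [if_neg (Finset.mem_compl.mp hj), hPAc j])]
      simp [Finset.card_compl]
    rw [h1, h2]
  -- Step 3: subadditivity and counting
  calc P (⋃ i ∈ Finset.Icc (n + 1) M, ⋃ T ∈ Finset.powersetCard i (Finset.univ : Finset (Fin M)), E T)
      ≤ ∑ i ∈ Finset.Icc (n + 1) M,
          P (⋃ T ∈ Finset.powersetCard i (Finset.univ : Finset (Fin M)), E T) :=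
        measure_biUnion_finset_le _ _
    _ ≤ ∑ i ∈ Finset.Icc (n + 1) M,
          ∑ T ∈ Finset.powersetCard i (Finset.univ : Finset (Fin M)), P (E T) :=
        Finset.sum_le_sum fun i _ => measure_biUnion_finset_le _ _
    _ = ∑ i ∈ Finset.Icc (n + 1) M,
          (M.choose i : ENNReal) * (ENNReal.ofReal p ^ i * ENNReal.ofReal (1 - p) ^ (M - i)) := by
        refine Finset.sum_congr rfl fun i _ => ?_
        rw [Finset.sum_congr rfl fun T hT => by
          rw [hET T, (Finset.mem_powersetCard.mp hT).2]]
        rw [Finset.sum_const, Finset.card_powersetCard, Finset.card_univ, Fintype.card_fin,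
          nsmul_eq_mul]
    _ = ENNReal.ofReal (∑ i ∈ Finset.Icc (n + 1) M,
          (M.choose i : ℝ) * p ^ i * (1 - p) ^ (M - i)) := by
        rw [ENNReal.ofReal_sum_of_nonneg (fun i _ => mul_nonneg (mul_nonneg (by positivity) (pow_nonneg hp0 i)) (pow_nonneg (by linarith) _))]
        refine Finset.sum_congr rfl fun i _ => ?_
        rw [ENNReal.ofReal_mul (mul_nonneg (by positivity) (pow_nonneg hp0 i)),
          ENNReal.ofReal_mul (by positivity),
          ENNReal.ofReal_pow hp0, ENNReal.ofReal_pow (by linarith),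
          ENNReal.ofReal_natCast, mul_assoc]
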